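/- Let μ and ν be probability distributions on ℤ (with possibly countably infinite support). If μ is ASU and even about 0 and ν is ASU about a ∈ ℤ, then the convolution μ ∗ ν is ASU about a. -/

import Mathlib

/-- Convolution of two functions on ℤ. -/
noncomputable def conv (f g : ℤ → ℝ) (e : ℤ) : ℝ := ∑' k : ℤ, f k * g (e - k)

/-- `μ` is almost symmetric unimodal (ASU) about `a`:
for every `n ∈ ℤ≥0`, `μ(a+n) ≥ μ(a-n) ≥ μ(a+n+1)`. -/
def ASU (μ : ℤ → ℝ) (a : ℤ) : Prop :=
  ∀ n : ℕ, μ (a - n) ≤ μ (a + n) ∧ μ (a + n + 1) ≤ μ (a - n)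

/-- if `μ` is an ASU and even probability distribution on ℤ and `ν`
is a probability distribution ASU about `a`, then `μ ∗ ν` is ASU about `a`. -/
theorem conv_asu (μ ν : ℤ → ℝ) (a : ℤ)
    (hμ0 : ∀ e, 0 ≤ μ e) (hμ1 : HasSum μ 1)
    (hν0 : ∀ e, 0 ≤ ν e) (hν1 : HasSum ν 1)
    (hμasu : ASU μ 0) (hμeven : ∀ e : ℤ, μ e = μ (-e))
    (hνasu : ASU ν a) :
    ASU (conv μ ν) a := by
  have hνle : ∀ e, ν e ≤ 1 := fun e => le_hasSum hν1 e fun _ _ => hν0 _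
  have hsum : ∀ m : ℤ, Summable fun k => μ k * ν (m - k) := fun m =>
    Summable.of_nonneg_of_le (fun k => mul_nonneg (hμ0 k) (hν0 _))
      (fun k => by nlinarith [hμ0 k, hν0 (m - k), hνle (m - k)]) hμ1.summable
  -- μ is antitone in the absolute value
  have hμnat : ∀ p q : ℕ, p ≤ q → μ (q : ℤ) ≤ μ (p : ℤ) := by
    have hA : Antitone fun p : ℕ => μ (p : ℤ) := by
      apply antitone_nat_of_succ_le
      intro p
      have h2 := (hμasu p).2
      have h3 := hμeven (p : ℤ)
      simp only [zero_add, zero_sub] at h2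
      rw [← h3] at h2
      simpa using h2
    exact fun p q h => hA h
  have hμabs : ∀ x y : ℤ, |x| ≤ |y| → μ y ≤ μ x := by
    intro x y h
    have hx : μ x = μ ((|x|.toNat : ℤ)) := by
      rw [Int.toNat_of_nonneg (abs_nonneg x)]
      rcases abs_cases x with ⟨h1, _⟩ | ⟨h1, _⟩
      · rw [h1]
      · rw [h1, ← hμeven]
    have hy : μ y = μ ((|y|.toNat : ℤ)) := by
      rw [Int.toNat_of_nonneg (abs_nonneg y)]
      rcases abs_cases y with ⟨h1, _⟩ | ⟨h1, _⟩
      · rw [h1]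
      · rw [h1, ← hμeven]
    rw [hx, hy]
    exact hμnat _ _ (Int.toNat_le_toNat h)
  -- ν facts
  have hν2 : ∀ j : ℤ, 0 ≤ j → ν (a - j) ≤ ν (a + j) := by
    intro j hj
    have := (hνasu j.toNat).1
    rwa [Int.toNat_of_nonneg hj] at this
  have hν3 : ∀ j : ℤ, 1 ≤ j → ν (a + j) ≤ ν (a + 1 - j) := by
    intro j hj
    have h := (hνasu (j - 1).toNat).2
    rw [Int.toNat_of_nonneg (by omega)] at h
    have e1 : a + (j - 1) + 1 = a + j := by ring
    have e2 : a - (j - 1) = a + 1 - j := by ring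
    rwa [e1, e2] at h
  -- reindexing lemmas
  have key : ∀ s : ℤ, Summable (fun j => μ (s - j) * ν (a + j)) ∧
      conv μ ν (a + s) = ∑' j, μ (s - j) * ν (a + j) := by
    intro s
    have h0 : (fun k => μ k * ν (a + s - k))
        = (fun j => μ (s - j) * ν (a + j)) ∘ (Equiv.subLeft s) := by
      funext k
      simp only [Function.comp_apply, Equiv.subLeft_apply, sub_sub_cancel, add_sub_assoc]
    constructor
    · exact (Equiv.subLeft s).summable_iff.mp (h0 ▸ hsum (a + s))
    · rw [conv]
      calc (∑' k, μ k * ν (a + s - k))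
          = ∑' k, ((fun j => μ (s - j) * ν (a + j)) ∘ (Equiv.subLeft s)) k := by rw [← h0]
        _ = ∑' j, μ (s - j) * ν (a + j) := by
            simpa [Function.comp] using
              (Equiv.subLeft s).tsum_eq (fun j => μ (s - j) * ν (a + j))
  have key2 : ∀ s : ℤ, Summable (fun j => μ (s + j) * ν (a + j)) ∧
      conv μ ν (a - s) = ∑' j, μ (s + j) * ν (a + j) := by
    intro s
    have h0 : (fun k => μ k * ν (a - s - k))
        = (fun j => μ (s + j) * ν (a + j)) ∘ (Equiv.subLeft (-s)) := by
      funext k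
      simp only [Function.comp_apply, Equiv.subLeft_apply]
      have e1 : s + (-s - k) = -k := by ring
      have e2 : a + (-s - k) = a - s - k := by ring
      rw [e1, e2, ← hμeven k]
    constructor
    · exact (Equiv.subLeft (-s)).summable_iff.mp (h0 ▸ hsum (a - s))
    · rw [conv]
      calc (∑' k, μ k * ν (a - s - k))
          = ∑' k, ((fun j => μ (s + j) * ν (a + j)) ∘ (Equiv.subLeft (-s))) k := by rw [← h0]
        _ = ∑' j, μ (s + j) * ν (a + j) := by
            simpa [Function.comp] using
              (Equiv.subLeft (-s)).tsum_eq (fun j => μ (s + j) * ν (a + j))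
  intro n
  set N : ℤ := (n : ℤ) with hN
  have hN0 : 0 ≤ N := Int.natCast_nonneg n
  obtain ⟨hS1, hE1⟩ := key N
  obtain ⟨hS2, hE2⟩ := key2 N
  obtain ⟨hS3, hE3⟩ := key (N + 1)
  constructor
  · -- conv (a - N) ≤ conv (a + N)
    set g : ℤ → ℝ := fun j => μ (N - j) * ν (a + j) - μ (N + j) * ν (a + j) with hgdef
    have hg : ∀ j : ℤ, 0 ≤ (μ (N - j) - μ (N + j)) * (ν (a + j) - ν (a - j)) := by
      intro j
      rcases le_or_gt 0 j with hj | hj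
      · have h1 : |N - j| ≤ |N + j| := by
          rw [abs_of_nonneg (by omega : (0:ℤ) ≤ N + j), abs_le]
          constructor <;> omega
        nlinarith [hμabs (N - j) (N + j) h1, hν2 j hj]
      · have h1 : |N + j| ≤ |N - j| := by
          rw [abs_of_nonneg (by omega : (0:ℤ) ≤ N - j), abs_le]
          constructor <;> omega
        have h2 := hν2 (-j) (by omega)
        rw [sub_neg_eq_add, ← sub_eq_add_neg] at h2
        nlinarith [hμabs (N + j) (N - j) h1, h2]
    have hgs : Summable g := hS1.sub hS2
    have hgneg : Summable fun j => g (-j) := by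
      have := (Equiv.neg ℤ).summable_iff.mpr hgs
      exact this
    have ht1 : ∑' j, g (-j) = ∑' j, g j := by
      have := (Equiv.neg ℤ).tsum_eq g
      simpa using this
    have ht2 : ∑' j, (g j + g (-j)) = (∑' j, g j) + ∑' j, g (-j) := Summable.tsum_add hgs hgneg
    have ht3 : 0 ≤ ∑' j, (g j + g (-j)) := by
      apply tsum_nonneg
      intro j
      have h := hg j
      have e1 : N - -j = N + j := by ring
      have e2 : N + -j = N - j := by ring
      have e3 : a + -j = a - j := by ring
      simp only [hgdef, e1, e2, e3]
      nlinarith [h]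
    have ht4 : 0 ≤ ∑' j, g j := by linarith
    have ht5 : ∑' j, g j = (∑' j, μ (N - j) * ν (a + j)) - ∑' j, μ (N + j) * ν (a + j) := by
      rw [hgdef]; exact Summable.tsum_sub hS1 hS2
    rw [hE1, hE2]
    linarith
  · -- conv (a + N + 1) ≤ conv (a - N)
    have hre : a + N + 1 = a + (N + 1) := by ring
    rw [hre, hE3, hE2]
    set g : ℤ → ℝ := fun j => μ (N + j) * ν (a + j) - μ (N + 1 - j) * ν (a + j) with hgdef
    have hg : ∀ j : ℤ, 0 ≤ (μ (N + j) - μ (N + 1 - j)) * (ν (a + j) - ν (a + 1 - j)) := by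
      intro j
      rcases le_or_gt 1 j with hj | hj
      · have h1 : |N + 1 - j| ≤ |N + j| := by
          rw [abs_of_nonneg (by omega : (0:ℤ) ≤ N + j), abs_le]
          constructor <;> omega
        nlinarith [hμabs (N + 1 - j) (N + j) h1, hν3 j hj]
      · have h1 : |N + j| ≤ |N + 1 - j| := by
          rw [abs_of_nonneg (by omega : (0:ℤ) ≤ N + 1 - j), abs_le]
          constructor <;> omega
        have h2 := hν3 (1 - j) (by omega)
        have e1 : a + (1 - j) = a + 1 - j := by ring
        have e2 : a + 1 - (1 - j) = a + j := by ring
        rw [e1, e2] at h2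
        nlinarith [hμabs (N + j) (N + 1 - j) h1, h2]
    have hgs : Summable g := hS2.sub hS3
    have hgflip : Summable fun j => g (1 - j) := by
      have := (Equiv.subLeft (1:ℤ)).summable_iff.mpr hgs
      exact this
    have ht1 : ∑' j, g (1 - j) = ∑' j, g j := by
      have := (Equiv.subLeft (1:ℤ)).tsum_eq g
      simpa using this
    have ht2 : ∑' j, (g j + g (1 - j)) = (∑' j, g j) + ∑' j, g (1 - j) := Summable.tsum_add hgs hgflip
    have ht3 : 0 ≤ ∑' j, (g j + g (1 - j)) := by
      apply tsum_nonneg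
      intro j
      have h := hg j
      have e1 : N + (1 - j) = N + 1 - j := by ring
      have e2 : N + 1 - (1 - j) = N + j := by ring
      have e3 : a + (1 - j) = a + 1 - j := by ring
      simp only [hgdef, e1, e2, e3]
      nlinarith [h]
    have ht4 : 0 ≤ ∑' j, g j := by linarith
    have ht5 : ∑' j, g j = (∑' j, μ (N + j) * ν (a + j)) - ∑' j, μ (N + 1 - j) * ν (a + j) := by
      rw [hgdef]; exact Summable.tsum_sub hS2 hS3
    linarith
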